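/- For the Lambert W function (principal branch), if x > e then log x − log log x < W(x), where W is defined by W(x)·e^{W(x)} = x for x ≥ 0. -/
import Mathlib


/-- Lambert W lower bound: if `x > e` and `w ≥ 0` satisfies `w eʷ = x`
(i.e. `w = W(x)`, the principal branch), then `log x − log log x < w`. -/
theorem lambertW_lower_bound (x w : ℝ) (hx : Real.exp 1 < x)
    (hw : 0 ≤ w) (hWx : w * Real.exp w = x) :
    Real.log x - Real.log (Real.log x) < w := by
  have hw1 : 1 < w := by
    by_contra h
    push_neg at h
    have : w * Real.exp w ≤ 1 * Real.exp 1 :=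
      mul_le_mul h (Real.exp_le_exp.mpr h) (Real.exp_pos w).le zero_le_one
    rw [hWx, one_mul] at this
    linarith
  have hw0 : 0 < w := by linarith
  have hlogx : Real.log x = Real.log w + w := by
    rw [← hWx, Real.log_mul (ne_of_gt hw0) (Real.exp_ne_zero w), Real.log_exp]
  have hlw : 0 < Real.log w := Real.log_pos hw1
  have h2 : Real.log w < Real.log (Real.log x) := by
    apply Real.log_lt_log hw0
    rw [hlogx]; linarith
  linarith
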